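/- Let a, b, c be real numbers with a > 0 and 4ac − b² > 0. Define sequences by a₀ = a, b₀ = b, c₀ = c and, for each n, Dₙ = (3aₙ+cₙ)(aₙ+3cₙ) − bₙ², a_{n+1} = aₙ·((aₙ+3cₙ)² − 3bₙ²)/Dₙ, b_{n+1} = bₙ·(3(aₙ−cₙ)² − bₙ²)/Dₙ, c_{n+1} = cₙ·((3aₙ+cₙ)² − 3bₙ²)/Dₙ. Then aₙ → (1/2)√(4ac − b²), cₙ → (1/2)√(4ac − b²), and bₙ → 0 as n → ∞. -/

import Mathlib

open Filter Real

set_option maxHeartbeats 1000000 in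
theorem landen_convergence (a b c : ℝ) (ha : 0 < a) (hD : 0 < 4 * a * c - b ^ 2)
    (A B C : ℕ → ℝ) (hA0 : A 0 = a) (hB0 : B 0 = b) (hC0 : C 0 = c)
    (hA : ∀ n, A (n + 1) = A n * ((A n + 3 * C n) ^ 2 - 3 * B n ^ 2) /
      ((3 * A n + C n) * (A n + 3 * C n) - B n ^ 2))
    (hB : ∀ n, B (n + 1) = B n * (3 * (A n - C n) ^ 2 - B n ^ 2) /
      ((3 * A n + C n) * (A n + 3 * C n) - B n ^ 2))
    (hC : ∀ n, C (n + 1) = C n * ((3 * A n + C n) ^ 2 - 3 * B n ^ 2) /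
      ((3 * A n + C n) * (A n + 3 * C n) - B n ^ 2)) :
    Tendsto A atTop (nhds ((1 / 2) * Real.sqrt (4 * a * c - b ^ 2))) ∧
    Tendsto C atTop (nhds ((1 / 2) * Real.sqrt (4 * a * c - b ^ 2))) ∧
    Tendsto B atTop (nhds 0) := by
  have hc : 0 < c := by nlinarith [sq_nonneg b]
  set Δ : ℝ := 4 * a * c - b ^ 2 with hΔdef
  have key : ∀ n, 4 * A n * C n - B n ^ 2 = Δ ∧ 0 < A n + C n ∧
      (A n - C n) ^ 2 + B n ^ 2 ≤ ((a - c) ^ 2 + b ^ 2) * (1 / 9) ^ n := by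
    intro n
    induction n with
    | zero =>
      refine ⟨by rw [hA0, hB0, hC0], by rw [hA0, hC0]; linarith, ?_⟩
      rw [hA0, hB0, hC0]; simp
    | succ n ih =>
      obtain ⟨hinv, hu, hs⟩ := ih
      have hsnn : (0:ℝ) ≤ (A n - C n) ^ 2 + B n ^ 2 := by positivity
      have hDeq : (3 * A n + C n) * (A n + 3 * C n) - B n ^ 2
          = 4 * Δ + 3 * ((A n - C n) ^ 2 + B n ^ 2) := by rw [← hinv]; ring
      have hDpos : 0 < (3 * A n + C n) * (A n + 3 * C n) - B n ^ 2 := by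
        rw [hDeq]; nlinarith
      have hDne : (3 * A n + C n) * (A n + 3 * C n) - B n ^ 2 ≠ 0 := ne_of_gt hDpos
      refine ⟨?_, ?_, ?_⟩
      · have st1 : 4 * A (n + 1) * C (n + 1) - B (n + 1) ^ 2
            = (4 * A n * C n * ((A n + 3 * C n) ^ 2 - 3 * B n ^ 2)
                * ((3 * A n + C n) ^ 2 - 3 * B n ^ 2)
              - B n ^ 2 * (3 * (A n - C n) ^ 2 - B n ^ 2) ^ 2)
              / ((3 * A n + C n) * (A n + 3 * C n) - B n ^ 2) ^ 2 := by
          rw [hA n, hB n, hC n]; field_simp; try ring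
        have st2 : 4 * A n * C n * ((A n + 3 * C n) ^ 2 - 3 * B n ^ 2)
                * ((3 * A n + C n) ^ 2 - 3 * B n ^ 2)
              - B n ^ 2 * (3 * (A n - C n) ^ 2 - B n ^ 2) ^ 2
            = Δ * ((3 * A n + C n) * (A n + 3 * C n) - B n ^ 2) ^ 2 := by
          linear_combination ((3 * A n + C n) * (A n + 3 * C n) - B n ^ 2) ^ 2 * hinv
        rw [st1, st2, mul_div_assoc, div_self (pow_ne_zero 2 hDne), mul_one]
      · have st1 : A (n + 1) + C (n + 1)
            = (A n * ((A n + 3 * C n) ^ 2 - 3 * B n ^ 2)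
               + C n * ((3 * A n + C n) ^ 2 - 3 * B n ^ 2))
              / ((3 * A n + C n) * (A n + 3 * C n) - B n ^ 2) := by
          rw [hA n, hC n]; field_simp; try ring
        have st2 : A n * ((A n + 3 * C n) ^ 2 - 3 * B n ^ 2)
               + C n * ((3 * A n + C n) ^ 2 - 3 * B n ^ 2)
            = (A n + C n) * ((A n + C n) ^ 2 + 3 * Δ) := by
          linear_combination 3 * (A n + C n) * hinv
        rw [st1, st2]
        have h2 : 0 < (A n + C n) ^ 2 + 3 * Δ := by nlinarith
        exact div_pos (mul_pos hu h2) hDpos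
      · have he : (A (n + 1) - C (n + 1)) ^ 2 + B (n + 1) ^ 2
            = ((A n - C n) ^ 2 + B n ^ 2) ^ 3
              / ((3 * A n + C n) * (A n + 3 * C n) - B n ^ 2) ^ 2 := by
          rw [hA n, hB n, hC n]; field_simp; try ring
        have hle : ((A n - C n) ^ 2 + B n ^ 2) ^ 3
            / ((3 * A n + C n) * (A n + 3 * C n) - B n ^ 2) ^ 2
            ≤ ((A n - C n) ^ 2 + B n ^ 2) / 9 := by
          rw [hDeq, div_le_div_iff₀ (by positivity) (by norm_num)]
          nlinarith [mul_nonneg (mul_nonneg hD.le hD.le) hsnn,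
            mul_nonneg (mul_nonneg hD.le hsnn) hsnn]
        rw [he]
        calc ((A n - C n) ^ 2 + B n ^ 2) ^ 3
              / ((3 * A n + C n) * (A n + 3 * C n) - B n ^ 2) ^ 2
            ≤ ((A n - C n) ^ 2 + B n ^ 2) / 9 := hle
          _ ≤ (((a - c) ^ 2 + b ^ 2) * (1 / 9) ^ n) / 9 := by linarith
          _ = ((a - c) ^ 2 + b ^ 2) * (1 / 9) ^ (n + 1) := by ring
  -- limits
  have hs0 : Tendsto (fun n => (A n - C n) ^ 2 + B n ^ 2) atTop (nhds 0) := by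
    have hg : Tendsto (fun n : ℕ => ((a - c) ^ 2 + b ^ 2) * (1 / 9) ^ n) atTop (nhds 0) := by
      have := tendsto_pow_atTop_nhds_zero_of_lt_one (by norm_num : (0:ℝ) ≤ 1/9)
        (by norm_num : (1/9 : ℝ) < 1)
      simpa using this.const_mul ((a - c) ^ 2 + b ^ 2)
    exact squeeze_zero (fun n => by positivity) (fun n => (key n).2.2) hg
  have hsqrt0 : Tendsto (fun n => Real.sqrt ((A n - C n) ^ 2 + B n ^ 2)) atTop (nhds 0) := by
    have := (Real.continuous_sqrt.tendsto 0).comp hs0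
    simpa [Function.comp_def] using this
  have hBlim : Tendsto B atTop (nhds 0) := by
    apply squeeze_zero_norm (fun n => ?_) hsqrt0
    rw [Real.norm_eq_abs, ← Real.sqrt_sq_eq_abs]
    exact Real.sqrt_le_sqrt (by nlinarith [sq_nonneg (A n - C n)])
  have hVlim : Tendsto (fun n => A n - C n) atTop (nhds 0) := by
    apply squeeze_zero_norm (fun n => ?_) hsqrt0
    rw [Real.norm_eq_abs, ← Real.sqrt_sq_eq_abs]
    exact Real.sqrt_le_sqrt (by nlinarith [sq_nonneg (B n)])
  have hUeq : ∀ n, A n + C n = Real.sqrt (Δ + ((A n - C n) ^ 2 + B n ^ 2)) := by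
    intro n
    have h1 : (A n + C n) ^ 2 = Δ + ((A n - C n) ^ 2 + B n ^ 2) := by
      linear_combination (key n).1
    rw [← h1, Real.sqrt_sq (le_of_lt (key n).2.1)]
  have hUlim : Tendsto (fun n => A n + C n) atTop (nhds (Real.sqrt Δ)) := by
    have h2 : Tendsto (fun n => Δ + ((A n - C n) ^ 2 + B n ^ 2)) atTop (nhds Δ) := by
      simpa using (tendsto_const_nhds (x := Δ) (f := atTop)).add hs0
    have h3 := (Real.continuous_sqrt.tendsto Δ).comp h2
    exact h3.congr fun n => (hUeq n).symm
  have hAlim : Tendsto A atTop (nhds ((1 / 2) * Real.sqrt Δ)) := by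
    have h := (hUlim.add hVlim).div_const 2
    have heq : (fun n => ((A n + C n) + (A n - C n)) / 2) = A := by funext n; ring
    rw [heq] at h
    convert h using 2; ring
  have hClim : Tendsto C atTop (nhds ((1 / 2) * Real.sqrt Δ)) := by
    have h := (hUlim.sub hVlim).div_const 2
    have heq : (fun n => ((A n + C n) - (A n - C n)) / 2) = C := by funext n; ring
    rw [heq] at h
    convert h using 2; ring
  exact ⟨hAlim, hClim, hBlim⟩
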